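/- Let A be a complex unital Banach algebra and let P, Q ∈ A be idempotents (P² = P, Q² = Q). Then the following are equivalent: (i) there exists an element V lying in the smallest closed subalgebra of A containing 1, P, Q, such that V is invertible in A and V P V⁻¹ = Q; (ii) 1 − P − Q is invertible in A; (iii) 1 does not belong to the spectrum of (P − Q)²; (iv) both P + 2Q − 1 and P + 2Q − 2 are invertible in A. Moreover, if (ii) holds and B = 1 − P − Q, then B P B⁻¹ = Q and B Q B⁻¹ = P. -/

import Mathlib

section helpers
variable {M : Type*} [Monoid M]

lemma isUnit_left_of_comm {x y : M} (h : x * y = y * x) (hu : IsUnit (x * y)) :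
    IsUnit x := by
  obtain ⟨u, hu⟩ := hu
  have hr : x * (y * ↑u⁻¹) = 1 := by rw [← mul_assoc, ← hu, Units.mul_inv]
  have hl : (↑u⁻¹ * y) * x = 1 := by rw [mul_assoc, ← h, ← hu, Units.inv_mul]
  have heq : (↑u⁻¹ * y : M) = y * ↑u⁻¹ := by
    calc (↑u⁻¹ * y : M) = (↑u⁻¹ * y) * (x * (y * ↑u⁻¹)) := by rw [hr, mul_one]
    _ = ((↑u⁻¹ * y) * x) * (y * ↑u⁻¹) := (mul_assoc _ _ _).symm
    _ = y * ↑u⁻¹ := by rw [hl, one_mul]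
  exact ⟨⟨x, y * ↑u⁻¹, hr, heq ▸ hl⟩, rfl⟩

lemma isUnit_of_isUnit_sq {x : M} (hu : IsUnit (x * x)) : IsUnit x :=
  isUnit_left_of_comm rfl hu

end helpers

section hard
variable {A : Type*} [NormedRing A] [NormedAlgebra ℂ A] [CompleteSpace A]

lemma hard_dir (P Q : A) (hP : P ^ 2 = P) (hQ : Q ^ 2 = Q)
    (hB : ¬ IsUnit (1 - P - Q)) (V : Aˣ)
    (hVmem : (V : A) ∈ (Algebra.adjoin ℂ ({P, Q} : Set A)).topologicalClosure)
    (hconj : (V : A) * P * (↑V⁻¹ : A) = Q) : False := by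
  have hPP : P * P = P := by rw [← pow_two]; exact hP
  have hQQ : Q * Q = Q := by rw [← pow_two]; exact hQ
  -- commutation of C = (P-Q)^2 with idempotents
  have key : ∀ X Y : A, X * X = X → Y * Y = Y → X * (X - Y)^2 = (X - Y)^2 * X := by
    intro X Y hX hY
    have h : X * (X - Y)^2 - (X - Y)^2 * X
        = -((X*X - X)*Y) + Y*(X*X - X) + X*(Y*Y - Y) - (Y*Y - Y)*X := by noncomm_ring
    rw [hX, hY, sub_self, sub_self] at h
    simp only [mul_zero, zero_mul, neg_zero, add_zero, zero_add, sub_zero] at h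
    exact sub_eq_zero.mp h
  have hswap : (Q - P)^2 = (P - Q)^2 := by noncomm_ring
  have hCP : P * (P - Q)^2 = (P - Q)^2 * P := key P Q hPP hQQ
  have hCQ : Q * (P - Q)^2 = (P - Q)^2 * Q := by
    have := key Q P hQQ hPP; rwa [hswap] at this
  -- the centralizer of C is a closed subalgebra
  have hcenClosed : IsClosed ((Subalgebra.centralizer ℂ {(P-Q)^2} : Subalgebra ℂ A) : Set A) := by
    have he : ((Subalgebra.centralizer ℂ {(P-Q)^2} : Subalgebra ℂ A) : Set A)
        = (fun x => (P-Q)^2 * x - x * (P-Q)^2) ⁻¹' {0} := by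
      ext x
      simp only [SetLike.mem_coe, Subalgebra.mem_centralizer_iff, Set.mem_singleton_iff,
        Set.mem_preimage, sub_eq_zero, forall_eq]
    rw [he]
    exact isClosed_singleton.preimage ((continuous_const.mul continuous_id).sub
      (continuous_id.mul continuous_const))
  have hVcomm : (P - Q)^2 * ↑V = ↑V * (P - Q)^2 := by
    have hadj : Algebra.adjoin ℂ ({P, Q} : Set A) ≤ Subalgebra.centralizer ℂ {(P-Q)^2} := by
      apply Algebra.adjoin_le
      rintro x hx
      rcases hx with rfl | hx
      · exact (Subalgebra.mem_centralizer_iff ℂ).mpr (by rintro g rfl; exact hCP.symm)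
      · rcases hx with rfl
        exact (Subalgebra.mem_centralizer_iff ℂ).mpr (by rintro g rfl; exact hCQ.symm)
    have hmem := Subalgebra.topologicalClosure_minimal hadj hcenClosed hVmem
    exact (Subalgebra.mem_centralizer_iff ℂ).mp hmem _ rfl
  have hVinvcomm : (P - Q)^2 * (↑V⁻¹ : A) = (↑V⁻¹ : A) * (P - Q)^2 := by
    rw [Units.mul_inv_eq_iff_eq_mul, mul_assoc, hVcomm, ← mul_assoc, Units.inv_mul, one_mul]
  set 𝔅 : Subalgebra ℂ A :=
    (Algebra.adjoin ℂ ({P, Q, ↑V, ↑V⁻¹} : Set A)).topologicalClosure with h𝔅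
  have hP𝔅 : P ∈ 𝔅 := Subalgebra.le_topologicalClosure _ (Algebra.subset_adjoin (by simp))
  have hQ𝔅 : Q ∈ 𝔅 := Subalgebra.le_topologicalClosure _ (Algebra.subset_adjoin (by simp))
  have hV𝔅 : (↑V : A) ∈ 𝔅 := Subalgebra.le_topologicalClosure _ (Algebra.subset_adjoin (by simp))
  have hVinv𝔅 : (↑V⁻¹ : A) ∈ 𝔅 :=
    Subalgebra.le_topologicalClosure _ (Algebra.subset_adjoin (by simp))
  have hCcen : ∀ b ∈ 𝔅, (P - Q)^2 * b = b * (P - Q)^2 := by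
    have hadj2 : Algebra.adjoin ℂ ({P, Q, ↑V, ↑V⁻¹} : Set A)
        ≤ Subalgebra.centralizer ℂ {(P-Q)^2} := by
      apply Algebra.adjoin_le
      intro x hx
      apply (Subalgebra.mem_centralizer_iff ℂ).mpr
      rintro g rfl
      rcases hx with rfl | rfl | rfl | rfl
      · exact hCP.symm
      · exact hCQ.symm
      · exact hVcomm
      · exact hVinvcomm
    intro b hb
    have hmem := Subalgebra.topologicalClosure_minimal hadj2 hcenClosed hb
    exact (Subalgebra.mem_centralizer_iff ℂ).mp hmem _ rfl
  set D : A := (P - Q)^2 - 1 with hD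
  have hDcen : ∀ b ∈ 𝔅, D * b = b * D := by
    intro b hb
    rw [hD, sub_mul, mul_sub, one_mul, mul_one, hCcen b hb]
  have hD𝔅 : D ∈ 𝔅 := by
    rw [hD]
    exact 𝔅.sub_mem (𝔅.pow_mem (𝔅.sub_mem hP𝔅 hQ𝔅) 2) (𝔅.one_mem)
  -- the ideal J
  set M0 : Submodule ℂ A :=
    (Subalgebra.toSubmodule 𝔅).map (LinearMap.mulLeft ℂ D) with hM0
  set J : Submodule ℂ A := M0.topologicalClosure with hJ
  have hJclosed : IsClosed (J : Set A) := M0.isClosed_topologicalClosure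
  have hM0sub : M0 ≤ Subalgebra.toSubmodule 𝔅 := by
    rintro x ⟨b, hb, rfl⟩
    exact 𝔅.mul_mem hD𝔅 hb
  have hJmem : ∀ x : A, x ∈ J ↔ x ∈ closure (M0 : Set A) := by
    intro x
    rw [hJ, ← SetLike.mem_coe, Submodule.topologicalClosure_coe]
  have hJ𝔅 : ∀ x ∈ J, x ∈ 𝔅 := by
    have h1 : J ≤ Subalgebra.toSubmodule 𝔅 := by
      rw [hJ]
      exact Submodule.topologicalClosure_minimal M0 hM0sub
        (by rw [Subalgebra.coe_toSubmodule, h𝔅]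
            exact Subalgebra.isClosed_topologicalClosure _)
    exact fun x hx => h1 hx
  have hJl : ∀ b ∈ 𝔅, ∀ j ∈ J, b * j ∈ J := by
    intro b hb j hj
    have hM : Set.MapsTo (fun y => b * y) (M0 : Set A) (M0 : Set A) := by
      rintro _ ⟨x, hx, rfl⟩
      refine ⟨b * x, 𝔅.mul_mem hb hx, ?_⟩
      show D * (b * x) = b * (D * x)
      rw [← mul_assoc, hDcen b hb, mul_assoc]
    rw [hJmem]
    exact map_mem_closure (f := fun y => b * y) (continuous_mul_left b) ((hJmem j).mp hj) hM
  have hJr : ∀ b ∈ 𝔅, ∀ j ∈ J, j * b ∈ J := by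
    intro b hb j hj
    have hM : Set.MapsTo (fun y => y * b) (M0 : Set A) (M0 : Set A) := by
      rintro _ ⟨x, hx, rfl⟩
      refine ⟨x * b, 𝔅.mul_mem hx hb, ?_⟩
      show D * (x * b) = (D * x) * b
      rw [mul_assoc]
    rw [hJmem]
    exact map_mem_closure (f := fun y => y * b) (continuous_mul_right b) ((hJmem j).mp hj) hM
  have hD_J : D ∈ J := by
    rw [hJ]
    exact Submodule.le_topologicalClosure _ ⟨1, 𝔅.one_mem, by simp⟩
  -- product identities
  have hPC2 : P * (P - Q)^2 = P - P*Q*P := by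
    have h : P * (P-Q)^2 - (P - P*Q*P)
        = P*(P*P - P) + (P*P - P) - (P*P - P)*Q + P*(Q*Q - Q) := by noncomm_ring
    rw [hPP, hQQ, sub_self, sub_self] at h
    simp only [mul_zero, zero_mul, add_zero, sub_zero, zero_add] at h
    exact sub_eq_zero.mp h
  have hQC2 : Q * (P - Q)^2 = Q - Q*P*Q := by
    have h : Q * (Q-P)^2 - (Q - Q*P*Q)
        = Q*(Q*Q - Q) + (Q*Q - Q) - (Q*Q - Q)*P + Q*(P*P - P) := by noncomm_ring
    rw [hPP, hQQ, sub_self, sub_self] at h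
    simp only [mul_zero, zero_mul, add_zero, sub_zero, zero_add] at h
    have h2 := sub_eq_zero.mp h
    rwa [hswap] at h2
  have hDPeq : P*Q*P = -(D * P) := by
    rw [hD, sub_mul, one_mul, ← hCP, hPC2]; abel
  have hDQeq : Q*P*Q = -(D * Q) := by
    rw [hD, sub_mul, one_mul, ← hCQ, hQC2]; abel
  have hPQP_J : P*Q*P ∈ J := by
    rw [hDPeq]
    exact J.neg_mem (by rw [hJ]; exact Submodule.le_topologicalClosure _ ⟨P, hP𝔅, rfl⟩)
  have hQPQ_J : Q*P*Q ∈ J := by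
    rw [hDQeq]
    exact J.neg_mem (by rw [hJ]; exact Submodule.le_topologicalClosure _ ⟨Q, hQ𝔅, rfl⟩)
  have hB2 : (1-P-Q)*(1-P-Q) = -D := by
    rw [hD]
    have h : (1-P-Q)*(1-P-Q) - (-((P-Q)^2 - 1))
        = (P*P - P) + (P*P - P) + (Q*Q - Q) + (Q*Q - Q) := by noncomm_ring
    rw [hPP, hQQ, sub_self, sub_self] at h
    simp only [add_zero, zero_add] at h
    exact sub_eq_zero.mp h
  have hB2_J : (1-P-Q)*(1-P-Q) ∈ J := by rw [hB2]; exact J.neg_mem hD_J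
  -- 1 is not in J
  have h1J : (1:A) ∉ J := by
    intro h1
    have h1' : (1:A) ∈ closure (M0 : Set A) := (hJmem 1).mp h1
    rw [Metric.mem_closure_iff] at h1'
    obtain ⟨b, hbM, hdist⟩ := h1' 1 one_pos
    rw [SetLike.mem_coe] at hbM
    obtain ⟨x, hx, rfl⟩ := hbM
    rw [dist_eq_norm] at hdist
    have h2 : ‖(1:A) - D * x‖ < 1 := hdist
    have hu : IsUnit (D * x) :=
      ⟨Units.oneSub _ h2, by rw [Units.val_oneSub, sub_sub_cancel]⟩
    have hDu : IsUnit D := isUnit_left_of_comm (hDcen x hx) hu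
    apply hB
    apply isUnit_of_isUnit_sq
    rw [hB2]
    exact hDu.neg
  -- W = span{1,P,Q,PQ,QP} + J is closed
  set Wsp : Submodule ℂ A := Submodule.span ℂ {1, P, Q, P*Q, Q*P} with hWsp
  set W : Submodule ℂ A := Wsp ⊔ J with hW
  have hWclosed : IsClosed (W : Set A) := by
    haveI hJc' : IsClosed (J : Set A) := hJclosed
    haveI : FiniteDimensional ℂ Wsp := by
      rw [hWsp]; exact FiniteDimensional.span_of_finite ℂ (Set.toFinite _)
    have hcont : Continuous J.mkQ :=
      AddMonoidHomClass.continuous_of_bound J.mkQ 1 fun x => by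
        rw [one_mul, Submodule.mkQ_apply]; exact Submodule.Quotient.norm_mk_le J x
    have heq : W = Submodule.comap J.mkQ (Submodule.map J.mkQ Wsp) := by
      rw [Submodule.comap_map_mkQ, hW, sup_comm]
    rw [heq, Submodule.comap_coe]
    exact (Submodule.closed_of_finiteDimensional _).preimage hcont
  -- basic members of W
  have hw1 : (1:A) ∈ W := Submodule.mem_sup_left (Submodule.subset_span (by simp))
  have hwP : P ∈ W := Submodule.mem_sup_left (Submodule.subset_span (by simp))
  have hwQ : Q ∈ W := Submodule.mem_sup_left (Submodule.subset_span (by simp))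
  have hwPQ : P*Q ∈ W := Submodule.mem_sup_left (Submodule.subset_span (by simp))
  have hwQP : Q*P ∈ W := Submodule.mem_sup_left (Submodule.subset_span (by simp))
  have jW : ∀ z ∈ J, z ∈ W := fun z hz => Submodule.mem_sup_right hz
  have hspan𝔅 : ∀ x ∈ Wsp, x ∈ 𝔅 := by
    intro x hx
    rw [hWsp] at hx
    have hle : Submodule.span ℂ {1, P, Q, P*Q, Q*P} ≤ Subalgebra.toSubmodule 𝔅 := by
      rw [Submodule.span_le]
      rintro y (rfl | rfl | rfl | rfl | rfl)
      · exact 𝔅.one_mem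
      · exact hP𝔅
      · exact hQ𝔅
      · exact 𝔅.mul_mem hP𝔅 hQ𝔅
      · exact 𝔅.mul_mem hQ𝔅 hP𝔅
    exact hle hx
  -- multiplication table
  have table : ∀ x ∈ ({1, P, Q, P*Q, Q*P} : Set A), ∀ y ∈ ({1, P, Q, P*Q, Q*P} : Set A),
      x * y ∈ W := by
    rintro x (rfl | rfl | rfl | rfl | rfl) y (rfl | rfl | rfl | rfl | rfl)
    · simpa using hw1
    · simpa using hwP
    · simpa using hwQ
    · simpa using hwPQ
    · simpa using hwQP
    · simpa using hwP
    · rw [hPP]; exact hwP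
    · exact hwPQ
    · rw [← mul_assoc, hPP]; exact hwPQ
    · rw [← mul_assoc]; exact jW _ hPQP_J
    · simpa using hwQ
    · exact hwQP
    · rw [hQQ]; exact hwQ
    · rw [← mul_assoc]; exact jW _ hQPQ_J
    · rw [← mul_assoc, hQQ]; exact hwQP
    · simpa using hwPQ
    · exact jW _ hPQP_J
    · rw [mul_assoc, hQQ]; exact hwPQ
    · rw [show (P*Q)*(P*Q) = (P*Q*P)*Q by noncomm_ring]
      exact jW _ (hJr Q hQ𝔅 _ hPQP_J)
    · rw [show (P*Q)*(Q*P) = P*(Q*Q)*P by noncomm_ring, hQQ]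
      exact jW _ hPQP_J
    · simpa using hwQP
    · rw [mul_assoc, hPP]; exact hwQP
    · exact jW _ hQPQ_J
    · rw [show (Q*P)*(P*Q) = Q*(P*P)*Q by noncomm_ring, hPP]
      exact jW _ hQPQ_J
    · rw [show (Q*P)*(Q*P) = (Q*P*Q)*P by noncomm_ring]
      exact jW _ (hJr P hP𝔅 _ hQPQ_J)
  have hWs : ∀ x ∈ Wsp, ∀ y ∈ Wsp, x * y ∈ W := by
    intro x hx
    rw [hWsp] at hx
    induction hx using Submodule.span_induction with
    | mem a ha =>
      intro y hy
      rw [hWsp] at hy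
      induction hy using Submodule.span_induction with
      | mem b hb => exact table a ha b hb
      | zero => rw [mul_zero]; exact W.zero_mem
      | add b c hb hc ihb ihc => rw [mul_add]; exact W.add_mem ihb ihc
      | smul r b hb ih => rw [mul_smul_comm]; exact W.smul_mem r ih
    | zero => intro y _; rw [zero_mul]; exact W.zero_mem
    | add a b ha hb iha ihb =>
      intro y hy
      rw [add_mul]; exact W.add_mem (iha y hy) (ihb y hy)
    | smul r a ha ih =>
      intro y hy
      rw [smul_mul_assoc]; exact W.smul_mem r (ih y hy)
  have hWmul : ∀ x ∈ W, ∀ y ∈ W, x * y ∈ W := by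
    intro x hx y hy
    rw [hW] at hx hy
    obtain ⟨xs, hxs, xj, hxj, rfl⟩ := Submodule.mem_sup.mp hx
    obtain ⟨ys, hys, yj, hyj, rfl⟩ := Submodule.mem_sup.mp hy
    have h1 : xs*ys ∈ W := hWs _ hxs _ hys
    have h2 : xs*yj ∈ J := hJl xs (hspan𝔅 _ hxs) _ hyj
    have h3 : xj*ys ∈ J := hJr ys (hspan𝔅 _ hys) _ hxj
    have h4 : xj*yj ∈ J := hJl xj (hJ𝔅 _ hxj) _ hyj
    have he : (xs+xj)*(ys+yj) = xs*ys + (xs*yj + (xj*ys + xj*yj)) := by noncomm_ring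
    rw [he]
    exact W.add_mem h1 (W.add_mem (jW _ h2) (W.add_mem (jW _ h3) (jW _ h4)))
  have hadjW : ∀ x ∈ Algebra.adjoin ℂ ({P, Q} : Set A), x ∈ W := by
    intro x hx
    induction hx using Algebra.adjoin_induction with
    | mem a ha =>
      rcases ha with rfl | rfl
      · exact hwP
      · exact hwQ
    | algebraMap r =>
      rw [Algebra.algebraMap_eq_smul_one]
      exact W.smul_mem r hw1
    | add a b ha hb iha ihb => exact W.add_mem iha ihb
    | mul a b ha hb iha ihb => exact hWmul _ iha _ ihb
  have hVW : (↑V : A) ∈ W := by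
    have h1 : closure ((Algebra.adjoin ℂ ({P, Q} : Set A) : Subalgebra ℂ A) : Set A)
        ⊆ (W : Set A) := closure_minimal (fun x hx => hadjW x hx) hWclosed
    exact h1 (by rw [← Subalgebra.topologicalClosure_coe]; exact hVmem)
  rw [hW] at hVW
  obtain ⟨w, hw, j, hj, hwj⟩ := Submodule.mem_sup.mp hVW
  have hw𝔅 : w ∈ 𝔅 := hspan𝔅 _ hw
  have hj𝔅 : j ∈ 𝔅 := hJ𝔅 _ hj
  rw [hWsp, Submodule.mem_span_insert] at hw
  obtain ⟨α, z1, hz1, hwe⟩ := hw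
  rw [Submodule.mem_span_insert] at hz1
  obtain ⟨β, z2, hz2, hz1e⟩ := hz1
  rw [Submodule.mem_span_insert] at hz2
  obtain ⟨γ, z3, hz3, hz2e⟩ := hz2
  rw [Submodule.mem_span_insert] at hz3
  obtain ⟨δ, z4, hz4, hz3e⟩ := hz3
  rw [Submodule.mem_span_singleton] at hz4
  obtain ⟨ε, hz4e⟩ := hz4
  have hweq : w = α•(1:A) + (β•P + (γ•Q + (δ•(P*Q) + ε•(Q*P)))) := by
    rw [hwe, hz1e, hz2e, hz3e, ← hz4e]
  have hVP : (↑V : A) * P = Q * ↑V := by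
    have h2 : (↑V * P * ↑V⁻¹) * ↑V = (↑V : A) * P := by
      rw [mul_assoc, Units.inv_mul, mul_one]
    rw [← h2, hconj]
  have hwPQw : w*P - Q*w ∈ J := by
    have hVPj : (w+j)*P = Q*(w+j) := by rw [hwj, hVP]
    have h3 : w*P - Q*w - (Q*j - j*P) = (w+j)*P - Q*(w+j) := by noncomm_ring
    rw [hVPj, sub_self] at h3
    rw [sub_eq_zero.mp h3]
    exact J.sub_mem (hJl Q hQ𝔅 _ hj) (hJr P hP𝔅 _ hj)
  have hQPP : Q*P*P = Q*P := by rw [mul_assoc, hPP]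
  have hexp : w*P - Q*w = ((α+β)•P - (α+γ)•Q + (γ-β)•(Q*P)) + δ•(P*Q*P) - δ•(Q*P*Q) := by
    rw [hweq]
    simp only [add_mul, mul_add, smul_mul_assoc, mul_smul_comm, one_mul, mul_one,
      hPP, hQQ, hQPP]
    rw [show Q*(P*Q) = Q*P*Q from (mul_assoc _ _ _).symm,
        show Q*(Q*P) = Q*P from by rw [← mul_assoc, hQQ]]
    module
  have hE : (α+β)•P - (α+γ)•Q + (γ-β)•(Q*P) ∈ J := by
    have h5 : (α+β)•P - (α+γ)•Q + (γ-β)•(Q*P)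
        = (w*P - Q*w) - δ•(P*Q*P) + δ•(Q*P*Q) := by rw [hexp]; abel
    rw [h5]
    exact J.add_mem (J.sub_mem hwPQw (J.smul_mem _ hPQP_J)) (J.smul_mem _ hQPQ_J)
  have hPE : (α+β)•P - (α+γ)•(P*Q) + (γ-β)•(P*Q*P) ∈ J := by
    have h6 := hJl P hP𝔅 _ hE
    have h7 : P*((α+β)•P - (α+γ)•Q + (γ-β)•(Q*P))
        = (α+β)•P - (α+γ)•(P*Q) + (γ-β)•(P*Q*P) := by
      simp only [mul_sub, mul_add, mul_smul_comm, hPP]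
      rw [show P*(Q*P) = P*Q*P from (mul_assoc _ _ _).symm]
    rwa [h7] at h6
  have hE1 : (α+β)•P - (α+γ)•(P*Q) ∈ J := by
    have h8 : (α+β)•P - (α+γ)•(P*Q)
        = ((α+β)•P - (α+γ)•(P*Q) + (γ-β)•(P*Q*P)) - (γ-β)•(P*Q*P) := by abel
    rw [h8]; exact J.sub_mem hPE (J.smul_mem _ hPQP_J)
  have hPJ : (α+β)•P ∈ J := by
    have h9 := hJr P hP𝔅 _ hE1
    have h10 : ((α+β)•P - (α+γ)•(P*Q))*P = (α+β)•P - (α+γ)•(P*Q*P) := by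
      simp only [sub_mul, smul_mul_assoc, hPP]
    rw [h10] at h9
    have h11 : (α+β)•P = ((α+β)•P - (α+γ)•(P*Q*P)) + (α+γ)•(P*Q*P) := by abel
    rw [h11]; exact J.add_mem h9 (J.smul_mem _ hPQP_J)
  have hEQ : (α+β)•(P*Q) - (α+γ)•Q + (γ-β)•(Q*P*Q) ∈ J := by
    have h6 := hJr Q hQ𝔅 _ hE
    have h7 : ((α+β)•P - (α+γ)•Q + (γ-β)•(Q*P))*Q
        = (α+β)•(P*Q) - (α+γ)•Q + (γ-β)•(Q*P*Q) := by
      simp only [sub_mul, add_mul, smul_mul_assoc, hQQ]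
    rwa [h7] at h6
  have hE2 : (α+β)•(P*Q) - (α+γ)•Q ∈ J := by
    have h8 : (α+β)•(P*Q) - (α+γ)•Q
        = ((α+β)•(P*Q) - (α+γ)•Q + (γ-β)•(Q*P*Q)) - (γ-β)•(Q*P*Q) := by abel
    rw [h8]; exact J.sub_mem hEQ (J.smul_mem _ hQPQ_J)
  have hQJ : (α+γ)•Q ∈ J := by
    have h9 := hJl Q hQ𝔅 _ hE2
    have h10 : Q*((α+β)•(P*Q) - (α+γ)•Q) = (α+β)•(Q*P*Q) - (α+γ)•Q := by
      simp only [mul_sub, mul_smul_comm, hQQ]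
      rw [show Q*(P*Q) = Q*P*Q from (mul_assoc _ _ _).symm]
    rw [h10] at h9
    have h11 : (α+γ)•Q = (α+β)•(Q*P*Q) - ((α+β)•(Q*P*Q) - (α+γ)•Q) := by abel
    rw [h11]; exact J.sub_mem (J.smul_mem _ hQPQ_J) h9
  have hone : P ∈ J → Q ∈ J → False := by
    intro hp hq
    apply h1J
    have hPQJ : (P - Q)*(P - Q) ∈ J := hJr (P-Q) (𝔅.sub_mem hP𝔅 hQ𝔅) _ (J.sub_mem hp hq)
    have he : (1:A) = (P-Q)*(P-Q) - D := by rw [hD, pow_two]; abel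
    rw [he]
    exact J.sub_mem hPQJ hD_J
  by_cases hab : α + β = 0
  · by_cases hag : α + γ = 0
    · have hβ : β = -α := eq_neg_of_add_eq_zero_right hab
      have hγ : γ = -α := eq_neg_of_add_eq_zero_right hag
      have hweq' : w = α•((1:A)-P-Q) + δ•(P*Q) + ε•(Q*P) := by
        rw [hweq, hβ, hγ]; module
      have hB_P : ((1:A)-P-Q)*P = -(Q*P) := by
        rw [sub_mul, sub_mul, one_mul, hPP]; abel
      have hB_Q : ((1:A)-P-Q)*Q = -(P*Q) := by
        rw [sub_mul, sub_mul, one_mul, hQQ]; abel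
      have hP_B : P*((1:A)-P-Q) = -(P*Q) := by
        rw [mul_sub, mul_sub, mul_one, hPP]; abel
      have hQ_B : Q*((1:A)-P-Q) = -(Q*P) := by
        rw [mul_sub, mul_sub, mul_one, hQQ]; abel
      have t2 : ((1:A)-P-Q)*(P*Q) ∈ J := by
        rw [← mul_assoc, hB_P, neg_mul]; exact J.neg_mem hQPQ_J
      have t3 : ((1:A)-P-Q)*(Q*P) ∈ J := by
        rw [← mul_assoc, hB_Q, neg_mul]; exact J.neg_mem hPQP_J
      have t4 : (P*Q)*((1:A)-P-Q) ∈ J := by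
        rw [mul_assoc, hQ_B, mul_neg, ← mul_assoc]; exact J.neg_mem hPQP_J
      have t5 : (Q*P)*((1:A)-P-Q) ∈ J := by
        rw [mul_assoc, hP_B, mul_neg, ← mul_assoc]; exact J.neg_mem hQPQ_J
      have t6 : (P*Q)*(P*Q) ∈ J := by
        rw [show (P*Q)*(P*Q) = (P*Q*P)*Q by noncomm_ring]; exact hJr Q hQ𝔅 _ hPQP_J
      have t7 : (P*Q)*(Q*P) ∈ J := by
        rw [show (P*Q)*(Q*P) = P*(Q*Q)*P by noncomm_ring, hQQ]; exact hPQP_J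
      have t8 : (Q*P)*(P*Q) ∈ J := by
        rw [show (Q*P)*(P*Q) = Q*(P*P)*Q by noncomm_ring, hPP]; exact hQPQ_J
      have t9 : (Q*P)*(Q*P) ∈ J := by
        rw [show (Q*P)*(Q*P) = (Q*P*Q)*P by noncomm_ring]; exact hJr P hP𝔅 _ hQPQ_J
      have hwB : w*((1:A)-P-Q) ∈ J := by
        rw [hweq']
        simp only [add_mul, smul_mul_assoc]
        exact J.add_mem (J.add_mem (J.smul_mem _ hB2_J) (J.smul_mem _ t4)) (J.smul_mem _ t5)
      have hwPQ' : w*(P*Q) ∈ J := by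
        rw [hweq']; simp only [add_mul, smul_mul_assoc]
        exact J.add_mem (J.add_mem (J.smul_mem _ t2) (J.smul_mem _ t6)) (J.smul_mem _ t8)
      have hwQP' : w*(Q*P) ∈ J := by
        rw [hweq']; simp only [add_mul, smul_mul_assoc]
        exact J.add_mem (J.add_mem (J.smul_mem _ t3) (J.smul_mem _ t7)) (J.smul_mem _ t9)
      have hww : w*w ∈ J := by
        have h13 : w*w = α•(w*((1:A)-P-Q)) + δ•(w*(P*Q)) + ε•(w*(Q*P)) := by
          nth_rewrite 2 [hweq']
          simp only [mul_add, mul_smul_comm]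
        rw [h13]
        exact J.add_mem (J.add_mem (J.smul_mem _ hwB) (J.smul_mem _ hwPQ'))
          (J.smul_mem _ hwQP')
      have hVV : (↑V : A) * ↑V ∈ J := by
        have h14 : (↑V : A) * ↑V = w*w + (w*j + (j*w + j*j)) := by
          rw [← hwj]; noncomm_ring
        rw [h14]
        exact J.add_mem hww (J.add_mem (hJl w hw𝔅 _ hj)
          (J.add_mem (hJr w hw𝔅 _ hj) (hJl j hj𝔅 _ hj)))
      apply h1J
      have h15 : (1:A) = (↑V * ↑V) * (↑V⁻¹ * ↑V⁻¹) := by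
        have h16 : ((↑V : A) * ↑V) * (↑V⁻¹ * ↑V⁻¹) = ↑V * (↑V * ↑V⁻¹) * ↑V⁻¹ := by
          noncomm_ring
        rw [h16, Units.mul_inv, mul_one, Units.mul_inv]
      rw [h15]
      exact hJr _ (𝔅.mul_mem hVinv𝔅 hVinv𝔅) _ hVV
    · have hq : Q ∈ J := by
        have h17 := J.smul_mem (α+γ)⁻¹ hQJ
        rwa [smul_smul, inv_mul_cancel₀ hag, one_smul] at h17
      have hp : P ∈ J := by
        have h12 : P = ↑V⁻¹ * (Q * ↑V) := by
          rw [← hVP, ← mul_assoc, Units.inv_mul, one_mul]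
        rw [h12]
        exact hJl _ hVinv𝔅 _ (hJr _ hV𝔅 _ hq)
      exact hone hp hq
  · have hp : P ∈ J := by
      have h17 := J.smul_mem (α+β)⁻¹ hPJ
      rwa [smul_smul, inv_mul_cancel₀ hab, one_smul] at h17
    have hq : Q ∈ J := by
      rw [← hconj]
      exact hJr _ hVinv𝔅 _ (hJl _ hV𝔅 _ hp)
    exact hone hp hq

end hard

/-- Equivalent conditions for the existence of an intertwining invertible element in the
smallest closed subalgebra generated by `1, P, Q` (for idempotents `P, Q` in a complex
unital Banach algebra), and the corresponding conjugation identities for `B = 1 - P - Q`. -/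
theorem stmt_8 {A : Type*} [NormedRing A] [NormedAlgebra ℂ A] [CompleteSpace A]
    (P Q : A) (hP : P ^ 2 = P) (hQ : Q ^ 2 = Q) :
    ((∃ V : Aˣ, (V : A) ∈ (Algebra.adjoin ℂ ({P, Q} : Set A)).topologicalClosure ∧
        (V : A) * P * (↑V⁻¹ : A) = Q) ↔ IsUnit (1 - P - Q)) ∧
    (IsUnit (1 - P - Q) ↔ (1 : ℂ) ∉ spectrum ℂ ((P - Q) ^ 2)) ∧
    (IsUnit (1 - P - Q) ↔ (IsUnit (P + 2 * Q - 1) ∧ IsUnit (P + 2 * Q - 2))) ∧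
    (∀ B : Aˣ, (B : A) = 1 - P - Q →
      (B : A) * P * (↑B⁻¹ : A) = Q ∧ (B : A) * Q * (↑B⁻¹ : A) = P) := by
  have hPP : P * P = P := by rw [← pow_two]; exact hP
  have hQQ : Q * Q = Q := by rw [← pow_two]; exact hQ
  have hBP : (1-P-Q)*P = Q*(1-P-Q) := by
    have h : (1-P-Q)*P - Q*(1-P-Q) = -(P*P - P) + (Q*Q - Q) := by noncomm_ring
    rw [hPP, hQQ, sub_self, sub_self, neg_zero, add_zero] at h
    exact sub_eq_zero.mp h
  have hBQ : (1-P-Q)*Q = P*(1-P-Q) := by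
    have h : (1-P-Q)*Q - P*(1-P-Q) = (P*P - P) - (Q*Q - Q) := by noncomm_ring
    rw [hPP, hQQ, sub_self, sub_self, sub_zero] at h
    exact sub_eq_zero.mp h
  have hB2 : (1-P-Q)*(1-P-Q) = 1 - (P-Q)^2 := by
    have h : (1-P-Q)*(1-P-Q) - (1 - (P-Q)^2)
        = (P*P - P) + (P*P - P) + (Q*Q - Q) + (Q*Q - Q) := by noncomm_ring
    rw [hPP, hQQ, sub_self, sub_self] at h
    simp only [add_zero] at h
    exact sub_eq_zero.mp h
  have hsq_iff : IsUnit (1-P-Q) ↔ IsUnit ((1-P-Q)*(1-P-Q)) :=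
    ⟨fun h => h.mul h, isUnit_of_isUnit_sq⟩
  have part4 : ∀ B : Aˣ, (B : A) = 1 - P - Q →
      (B : A) * P * (↑B⁻¹ : A) = Q ∧ (B : A) * Q * (↑B⁻¹ : A) = P := by
    intro B hB
    constructor
    · have h1 : (B : A) * P = Q * B := by rw [hB]; exact hBP
      rw [h1, mul_assoc, Units.mul_inv, mul_one]
    · have h1 : (B : A) * Q = P * B := by rw [hB]; exact hBQ
      rw [h1, mul_assoc, Units.mul_inv, mul_one]
  refine ⟨⟨?_, ?_⟩, ?_, ?_, part4⟩
  · rintro ⟨V, hVmem, hconj⟩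
    by_contra hB
    exact hard_dir P Q hP hQ hB V hVmem hconj
  · intro h
    refine ⟨h.unit, ?_, ?_⟩
    · have hmem : (1 - P - Q) ∈ Algebra.adjoin ℂ ({P, Q} : Set A) :=
        sub_mem (sub_mem (one_mem _) (Algebra.subset_adjoin (by simp)))
          (Algebra.subset_adjoin (by simp))
      have h2 := Subalgebra.le_topologicalClosure _ hmem
      rwa [h.unit_spec]
    · exact (part4 h.unit h.unit_spec).1
  · rw [spectrum.notMem_iff, map_one, ← hB2]
    exact hsq_iff
  · have hXY : (P+2*Q-1)*(P+2*Q-2) = 2*((1-P-Q)*(1-P-Q)) := by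
      have h : (P+2*Q-1)*(P+2*Q-2) - 2*((1-P-Q)*(1-P-Q))
          = -(P*P - P) + (Q*Q - Q) + (Q*Q - Q) := by noncomm_ring
      rw [hPP, hQQ, sub_self, sub_self, neg_zero, add_zero, add_zero] at h
      exact sub_eq_zero.mp h
    have hYX : (P+2*Q-2)*(P+2*Q-1) = 2*((1-P-Q)*(1-P-Q)) := by
      have h : (P+2*Q-2)*(P+2*Q-1) - (P+2*Q-1)*(P+2*Q-2) = 0 := by
        noncomm_ring
        simp [zsmul_eq_mul]
      rw [sub_eq_zero.mp h, hXY]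
    have h2u : IsUnit (2 : A) := by
      have h1 : IsUnit (algebraMap ℂ A 2) :=
        (isUnit_iff_ne_zero.mpr two_ne_zero).map (algebraMap ℂ A)
      rwa [map_ofNat] at h1
    constructor
    · intro h
      have hs : IsUnit (2*((1-P-Q)*(1-P-Q))) := h2u.mul (h.mul h)
      have hcomm : (P+2*Q-1)*(P+2*Q-2) = (P+2*Q-2)*(P+2*Q-1) := by rw [hXY, hYX]
      constructor
      · exact isUnit_left_of_comm hcomm (by rw [hXY]; exact hs)
      · exact isUnit_left_of_comm hcomm.symm (by rw [hYX]; exact hs)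
    · rintro ⟨h1, h2⟩
      have h3 : IsUnit (2*((1-P-Q)*(1-P-Q))) := by rw [← hXY]; exact h1.mul h2
      have h4 : IsUnit ((1-P-Q)*(1-P-Q)) := by
        obtain ⟨u, hu⟩ := h2u
        have h5 : (1-P-Q)*(1-P-Q) = ↑u⁻¹ * (2*((1-P-Q)*(1-P-Q))) := by
          rw [← hu, ← mul_assoc, Units.inv_mul, one_mul]
        rw [h5]
        exact u⁻¹.isUnit.mul h3
      exact hsq_iff.mpr h4
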